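/- Let f₁ be σ₁-convex, f₂ be σ₂-convex with σ₂ > 0, and fix λ ∈ (0,1), t ∈ (0,1] such that σ̄_t := σ₁(1-t) + σ₂ - λσ₂/t > 0, and γ ∈ [0, σ̄_t/2). Suppose yᵏ ∈ ∂f₂(xᵏ), yᵏ + γ(xᵏ - xᵏ⁻¹) ∈ ∂_{εᵏ⁺¹} f₁(xᵏ⁺¹) with 0 ≤ εᵏ⁺¹ ≤ (λσ₂/2)‖xᵏ⁺¹ - xᵏ‖². Then f(xᵏ⁺¹) + ((σ̄_t - γ)/2)‖xᵏ⁺¹ - xᵏ‖² ≤ f(xᵏ) + ((σ̄_t - γ)/2)‖xᵏ - xᵏ⁻¹‖² - ((σ̄_t - 2γ)/2)‖xᵏ - xᵏ⁻¹‖². -/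
import Mathlib


open RealInnerProductSpace

def subdiff {n : ℕ} (f : EuclideanSpace ℝ (Fin n) → ℝ) (x : EuclideanSpace ℝ (Fin n)) :
    Set (EuclideanSpace ℝ (Fin n)) :=
  {y | ∀ z, f x + ⟪y, z - x⟫ ≤ f z}

/-- The ε-subdifferential of an ℝ-valued convex function. -/
def epsSubdiff {n : ℕ} (f : EuclideanSpace ℝ (Fin n) → ℝ) (ε : ℝ)
    (x : EuclideanSpace ℝ (Fin n)) : Set (EuclideanSpace ℝ (Fin n)) :=
  {y | ∀ z, f x + ⟪y, z - x⟫ - ε ≤ f z}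

def StrongConvex {n : ℕ} (σ : ℝ) (f : EuclideanSpace ℝ (Fin n) → ℝ) : Prop :=
  ConvexOn ℝ Set.univ (fun x => f x - σ / 2 * ‖x‖ ^ 2)

lemma strong_eps_subgrad {n : ℕ} (f : EuclideanSpace ℝ (Fin n) → ℝ) (σ ε t : ℝ)
    (hf : StrongConvex σ f) (ht : t ∈ Set.Ioc (0:ℝ) 1)
    (x y z : EuclideanSpace ℝ (Fin n)) (hy : y ∈ epsSubdiff f ε x) :
    f x + ⟪y, z - x⟫ + σ * (1 - t) / 2 * ‖z - x‖ ^ 2 - ε / t ≤ f z := by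
  have ht0 : (0:ℝ) < t := ht.1
  set w := x + t • (z - x) with hwdef
  have hw : (1 - t) • x + t • z = w := by
    rw [hwdef, smul_sub, sub_smul, one_smul]; abel
  have hconv := hf.2 (Set.mem_univ x) (Set.mem_univ z) (by linarith [ht.2] : (0:ℝ) ≤ 1 - t)
    ht0.le (by ring)
  rw [hw] at hconv
  simp only [smul_eq_mul] at hconv
  have hnw : ‖w‖ ^ 2 = ‖x‖ ^ 2 + 2 * t * ⟪x, z - x⟫ + t ^ 2 * ‖z - x‖ ^ 2 := by
    rw [hwdef, norm_add_sq_real, real_inner_smul_right, norm_smul, mul_pow]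
    simp [sq_abs]; ring
  have hnz : ‖z‖ ^ 2 = ‖x‖ ^ 2 + 2 * ⟪x, z - x⟫ + ‖z - x‖ ^ 2 := by
    have := norm_add_sq_real x (z - x)
    simpa using this
  have hcomb : f w ≤ (1 - t) * f x + t * f z - σ / 2 * (t * (1 - t)) * ‖z - x‖ ^ 2 := by
    rw [hnw, hnz] at hconv
    nlinarith [hconv]
  have h1 : f x + t * ⟪y, z - x⟫ - ε ≤ f w := by
    have := hy w
    rwa [hwdef, add_sub_cancel_left, real_inner_smul_right] at this
  have hkey : (f x + ⟪y, z - x⟫ + σ * (1 - t) / 2 * ‖z - x‖ ^ 2 - f z) * t ≤ ε := by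
    nlinarith [h1, hcomb]
  have := (le_div_iff₀ ht0).mpr hkey
  linarith

lemma strong_subgrad {n : ℕ} (f : EuclideanSpace ℝ (Fin n) → ℝ) (σ : ℝ)
    (hf : StrongConvex σ f)
    (x y z : EuclideanSpace ℝ (Fin n)) (hy : y ∈ subdiff f x) :
    f x + ⟪y, z - x⟫ + σ / 2 * ‖z - x‖ ^ 2 ≤ f z := by
  have key : ∀ s : ℝ, s ∈ Set.Ioc (0:ℝ) 1 →
      f x + ⟪y, z - x⟫ + σ * (1 - s) / 2 * ‖z - x‖ ^ 2 ≤ f z := by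
    intro s hs
    have h := strong_eps_subgrad f σ 0 s hf hs x y z (by intro z'; simpa using hy z')
    simpa using h
  have hlim : Filter.Tendsto
      (fun m : ℕ => f x + ⟪y, z - x⟫ + σ * (1 - 1 / (m + 1)) / 2 * ‖z - x‖ ^ 2)
      Filter.atTop (nhds (f x + ⟪y, z - x⟫ + σ / 2 * ‖z - x‖ ^ 2)) := by
    have h0 : Filter.Tendsto (fun m : ℕ => 1 / ((m:ℝ) + 1)) Filter.atTop (nhds 0) :=
      tendsto_one_div_add_atTop_nhds_zero_nat
    have h1 := ((h0.const_mul (σ / 2 * ‖z - x‖ ^ 2)).const_sub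
      (f x + ⟪y, z - x⟫ + σ / 2 * ‖z - x‖ ^ 2))
    simp only [mul_zero, sub_zero] at h1
    convert h1 using 2 with m
    ring
  refine le_of_tendsto hlim (Filter.Eventually.of_forall fun m => ?_)
  apply key
  constructor
  · positivity
  · rw [div_le_one (by positivity)]
    linarith [Nat.cast_nonneg (α := ℝ) m]

/-- Lemma 3.2: descent inequality for one step of the refined inexact inertial DCA. -/
theorem RInDCAn_descent {n : ℕ}
    (f₁ f₂ : EuclideanSpace ℝ (Fin n) → ℝ) (σ₁ σ₂ γ lam t ε : ℝ)
    (hσ₁ : 0 ≤ σ₁) (hσ₂ : 0 < σ₂)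
    (hlam : lam ∈ Set.Ioo (0 : ℝ) 1) (ht : t ∈ Set.Ioc (0 : ℝ) 1)
    (hσbar : 0 < σ₁ * (1 - t) + σ₂ - lam * σ₂ / t)
    (hγ : γ ∈ Set.Ico (0 : ℝ) ((σ₁ * (1 - t) + σ₂ - lam * σ₂ / t) / 2))
    (hf₁ : StrongConvex σ₁ f₁) (hf₂ : StrongConvex σ₂ f₂)
    (xkm1 xk xkp1 yk : EuclideanSpace ℝ (Fin n))
    (hyk : yk ∈ subdiff f₂ xk)
    (hstep : yk + γ • (xk - xkm1) ∈ epsSubdiff f₁ ε xkp1)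
    (hε : 0 ≤ ε ∧ ε ≤ lam * σ₂ / 2 * ‖xkp1 - xk‖ ^ 2) :
    (f₁ xkp1 - f₂ xkp1) + (σ₁ * (1 - t) + σ₂ - lam * σ₂ / t - γ) / 2 * ‖xkp1 - xk‖ ^ 2
      ≤ (f₁ xk - f₂ xk) + (σ₁ * (1 - t) + σ₂ - lam * σ₂ / t - γ) / 2 * ‖xk - xkm1‖ ^ 2
        - (σ₁ * (1 - t) + σ₂ - lam * σ₂ / t - 2 * γ) / 2 * ‖xk - xkm1‖ ^ 2 := by
  have ht0 : (0:ℝ) < t := ht.1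
  have hγ0 : 0 ≤ γ := hγ.1
  have i1 := strong_eps_subgrad f₁ σ₁ ε t hf₁ ht xkp1 (yk + γ • (xk - xkm1)) xk hstep
  have i2 := strong_subgrad f₂ σ₂ hf₂ xk yk xkp1 hyk
  rw [inner_add_left, real_inner_smul_left, show xk - xkp1 = -(xkp1 - xk) by abel,
    inner_neg_right, inner_neg_right, norm_neg] at i1
  have i3 : ε / t ≤ lam * σ₂ / t / 2 * ‖xkp1 - xk‖ ^ 2 := by
    calc ε / t ≤ (lam * σ₂ / 2 * ‖xkp1 - xk‖ ^ 2) / t := by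
          apply div_le_div_of_nonneg_right hε.2 ht0.le
      _ = lam * σ₂ / t / 2 * ‖xkp1 - xk‖ ^ 2 := by ring
  have i4 : 2 * ⟪xk - xkm1, xkp1 - xk⟫ ≤ ‖xk - xkm1‖ ^ 2 + ‖xkp1 - xk‖ ^ 2 := by
    have h := norm_sub_sq_real (xk - xkm1) (xkp1 - xk)
    nlinarith [sq_nonneg ‖(xk - xkm1) - (xkp1 - xk)‖]
  have i4' := mul_le_mul_of_nonneg_left i4 hγ0
  linarith
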